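/- Let a, b, c be complex numbers with 2-c not a nonpositive integer. Then the function y(x) = x^{1-c} · ₂F₁(1+a-c, 1+b-c; 2-c; x), viewed as a complex-valued function of the real variable x on the interval (0,1), is twice differentiable and satisfies the Gauss hypergeometric equation x(1-x)·y''(x) + (c - (a+b+1)x)·y'(x) - ab·y(x) = 0 for all x ∈ (0,1). (The second solution u₅ of the Gauss equation.) -/

import Mathlib

open Complex Filter Set MeasureTheory
open Topology

/-- The `n`-th term of the Gauss hypergeometric series `₂F₁(a,b;c;z)`. -/
noncomputable def hypTerm (a b c z : ℂ) (n : ℕ) : ℂ :=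
  (ascPochhammer ℂ n).eval a * (ascPochhammer ℂ n).eval b /
    ((ascPochhammer ℂ n).eval c * (n.factorial : ℂ)) * z ^ n

/-- The Gauss hypergeometric function `₂F₁(a,b;c;z)`. -/
noncomputable def hyp (a b c z : ℂ) : ℂ := ∑' n, hypTerm a b c z n

namespace HypAux


noncomputable def α (A B C : ℂ) (n : ℕ) : ℂ :=
  (ascPochhammer ℂ n).eval A * (ascPochhammer ℂ n).eval B /
    ((ascPochhammer ℂ n).eval C * (n.factorial : ℂ))

variable {A B C : ℂ}

lemma poch_ne_zero (hC : ∀ n : ℕ, C ≠ -(n : ℂ)) (n : ℕ) :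
    (ascPochhammer ℂ n).eval C ≠ 0 := by
  induction n with
  | zero => simp
  | succ m ih =>
    rw [ascPochhammer_succ_eval]
    refine mul_ne_zero ih ?_
    intro h
    exact hC m (by linear_combination h)

lemma Cn_ne_zero (hC : ∀ n : ℕ, C ≠ -(n : ℂ)) (n : ℕ) : C + (n : ℂ) ≠ 0 := by
  intro h; exact hC n (by linear_combination h)

lemma alpha_succ (A B C : ℂ) (n : ℕ) :
    α A B C (n + 1) = α A B C n * ((A + (n : ℂ)) * (B + (n : ℂ)))
      / (((n : ℂ) + 1) * (C + (n : ℂ))) := by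
  unfold α
  rw [ascPochhammer_succ_eval, ascPochhammer_succ_eval, ascPochhammer_succ_eval,
    Nat.factorial_succ, div_mul_eq_mul_div, div_div]
  congr 1
  · ring
  · push_cast; ring

lemma alpha_rec (hC : ∀ n : ℕ, C ≠ -(n : ℂ)) (n : ℕ) :
    α A B C (n + 1) * (((n : ℂ) + 1) * (C + (n : ℂ)))
      = α A B C n * ((A + (n : ℂ)) * (B + (n : ℂ))) := by
  rw [alpha_succ]
  refine div_mul_cancel₀ _ (mul_ne_zero ?_ (Cn_ne_zero hC n))
  exact Nat.cast_add_one_ne_zero n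

lemma alpha_norm_succ (A B C : ℂ) (n : ℕ) :
    ‖α A B C (n + 1)‖ = ‖α A B C n‖ *
      ((‖A + (n : ℂ)‖ / ((n : ℝ) + 1)) * (‖B + (n : ℂ)‖ / ‖C + (n : ℂ)‖)) := by
  rw [alpha_succ, norm_div, norm_mul, norm_mul, norm_mul]
  have h : ‖(n : ℂ) + 1‖ = (n : ℝ) + 1 := by
    rw [show ((n : ℂ) + 1) = ((n + 1 : ℕ) : ℂ) by push_cast; ring, Complex.norm_natCast]
    push_cast; ring
  rw [h, div_mul_div_comm, mul_div_assoc]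


-- limit lemmas
lemma tendsto_aux1 (A : ℂ) :
    Tendsto (fun n : ℕ => (A + (n : ℂ)) / ((n : ℂ) + 1)) atTop (𝓝 1) := by
  have h0 : Tendsto (fun n : ℕ => ((n : ℂ) + 1)⁻¹) atTop (𝓝 0) := by
    rw [tendsto_zero_iff_norm_tendsto_zero]
    have : ∀ n : ℕ, ‖((n : ℂ) + 1)⁻¹‖ = ((n : ℝ) + 1)⁻¹ := by
      intro n
      rw [norm_inv, show ((n : ℂ) + 1) = ((n + 1 : ℕ) : ℂ) by push_cast; ring,
        Complex.norm_natCast]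
      push_cast; ring
    simp only [this]
    exact (tendsto_atTop_add_const_right atTop (1:ℝ) (tendsto_natCast_atTop_atTop (R := ℝ))).inv_tendsto_atTop
  have he : ∀ n : ℕ, (A + (n : ℂ)) / ((n : ℂ) + 1) = 1 + (A - 1) * ((n : ℂ) + 1)⁻¹ := by
    intro n
    have hne : ((n : ℂ) + 1) ≠ 0 := Nat.cast_add_one_ne_zero n
    field_simp
    ring
  simp only [he]
  have := (tendsto_const_nhds (x := (A - 1)) (f := atTop (α := ℕ))).mul h0
  rw [mul_zero] at this
  simpa using (tendsto_const_nhds (x := (1 : ℂ)) (f := atTop (α := ℕ))).add this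

lemma tendsto_norm_add_atTop (C : ℂ) :
    Tendsto (fun n : ℕ => ‖C + (n : ℂ)‖) atTop atTop := by
  apply tendsto_atTop_mono (f := fun n : ℕ => (n : ℝ) - ‖C‖)
  · intro n
    have h1 : ‖(n : ℂ)‖ ≤ ‖C + (n : ℂ)‖ + ‖C‖ := by
      calc ‖(n : ℂ)‖ = ‖(C + (n : ℂ)) - C‖ := by ring_nf
      _ ≤ ‖C + (n : ℂ)‖ + ‖C‖ := norm_sub_le _ _
    rw [Complex.norm_natCast] at h1
    linarith
  · exact tendsto_atTop_add_const_right _ _ tendsto_natCast_atTop_atTop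

lemma tendsto_aux2 (hC : ∀ n : ℕ, C ≠ -(n : ℂ)) (B : ℂ) :
    Tendsto (fun n : ℕ => (B + (n : ℂ)) / (C + (n : ℂ))) atTop (𝓝 1) := by
  have h0 : Tendsto (fun n : ℕ => (B - C) / (C + (n : ℂ))) atTop (𝓝 0) := by
    rw [tendsto_zero_iff_norm_tendsto_zero]
    simp only [norm_div]
    exact Tendsto.div_atTop tendsto_const_nhds (tendsto_norm_add_atTop C)
  have he : ∀ n : ℕ, (B + (n : ℂ)) / (C + (n : ℂ)) = 1 + (B - C) / (C + (n : ℂ)) := by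
    intro n
    have hne : C + (n : ℂ) ≠ 0 := fun h => hC n (by linear_combination h)
    field_simp
    ring
  simp only [he]
  simpa using (tendsto_const_nhds (x := (1 : ℂ)) (f := atTop (α := ℕ))).add h0

lemma tendsto_aux3 (k : ℕ) :
    Tendsto (fun n : ℕ => (((n : ℝ) + 2) / ((n : ℝ) + 1)) ^ k) atTop (𝓝 1) := by
  have h0 : Tendsto (fun n : ℕ => ((n : ℝ) + 2) / ((n : ℝ) + 1)) atTop (𝓝 1) := by
    have he : ∀ n : ℕ, ((n : ℝ) + 2) / ((n : ℝ) + 1) = 1 + 1 / ((n : ℝ) + 1) := by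
      intro n
      have : ((n : ℝ) + 1) ≠ 0 := by positivity
      field_simp
      ring
    simp only [he]
    have : Tendsto (fun n : ℕ => 1 / ((n : ℝ) + 1)) atTop (𝓝 0) := by
      simp only [one_div]; exact (tendsto_atTop_add_const_right atTop (1:ℝ) (tendsto_natCast_atTop_atTop (R := ℝ))).inv_tendsto_atTop
    simpa using (tendsto_const_nhds (x := (1 : ℝ)) (f := atTop (α := ℕ))).add this
  simpa using h0.pow k



lemma sum_aux (hC : ∀ n : ℕ, C ≠ -(n : ℂ)) {r : ℝ} (hr0 : 0 < r) (hr1 : r < 1) (k : ℕ) :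
    Summable (fun n => ‖α A B C n‖ * ((n : ℝ) + 1) ^ k * r ^ n) := by
  set f : ℕ → ℝ := fun n => ‖α A B C n‖ * ((n : ℝ) + 1) ^ k * r ^ n with hf
  set q : ℕ → ℝ := fun n =>
    ((‖A + (n : ℂ)‖ / ((n : ℝ) + 1)) * (‖B + (n : ℂ)‖ / ‖C + (n : ℂ)‖)) *
      ((((n : ℝ) + 2) / ((n : ℝ) + 1)) ^ k * r) with hq
  have hrec : ∀ n, f (n + 1) = f n * q n := by
    intro n
    simp only [hf, hq]
    have h1 : ((n : ℝ) + 1) ≠ 0 := by positivity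
    have key : (((n : ℝ) + 1)⁻¹) ^ k * ((n : ℝ) + 1) ^ k = 1 := by
      rw [← mul_pow, inv_mul_cancel₀ h1, one_pow]
    rw [alpha_norm_succ, div_pow]
    push_cast
    linear_combination (-‖α A B C n‖ * ‖A + (n : ℂ)‖ * (((n : ℝ) + 1)⁻¹) *
      ‖B + (n : ℂ)‖ * (‖C + (n : ℂ)‖⁻¹) * r * r ^ n * ((n : ℝ) + 2) ^ k) * key
  have hq_lim : Tendsto q atTop (𝓝 r) := by
    have h1 : Tendsto (fun n : ℕ => ‖A + (n : ℂ)‖ / ((n : ℝ) + 1)) atTop (𝓝 1) := by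
      have hn : ∀ n : ℕ, ‖A + (n : ℂ)‖ / ((n : ℝ) + 1) = ‖(A + (n : ℂ)) / ((n : ℂ) + 1)‖ := by
        intro n
        rw [norm_div, show ((n : ℂ) + 1) = ((n + 1 : ℕ) : ℂ) by push_cast; ring,
          Complex.norm_natCast]
        push_cast; ring
      simp only [hn]
      simpa using (tendsto_aux1 A).norm
    have h2 : Tendsto (fun n : ℕ => ‖B + (n : ℂ)‖ / ‖C + (n : ℂ)‖) atTop (𝓝 1) := by
      have hn : ∀ n : ℕ, ‖B + (n : ℂ)‖ / ‖C + (n : ℂ)‖ = ‖(B + (n : ℂ)) / (C + (n : ℂ))‖ := by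
        intro n; rw [norm_div]
      simp only [hn]
      simpa using (tendsto_aux2 hC B).norm
    have h3 := tendsto_aux3 k
    have := (h1.mul h2).mul (h3.mul_const r)
    simpa using this
  have hev : ∀ᶠ n in atTop, q n < (1 + r) / 2 := hq_lim.eventually_lt_const (by linarith)
  apply summable_of_ratio_norm_eventually_le (r := (1 + r) / 2) (by linarith)
  filter_upwards [hev] with n hn
  have hfn : 0 ≤ f n := by simp only [hf]; positivity
  have hq0 : 0 ≤ q n := by simp only [hq]; positivity
  have hfn1 : 0 ≤ f (n + 1) := by simp only [hf]; positivity
  rw [Real.norm_of_nonneg hfn1, Real.norm_of_nonneg hfn, hrec n]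
  calc f n * q n ≤ f n * ((1 + r) / 2) := mul_le_mul_of_nonneg_left hn.le hfn
  _ = (1 + r) / 2 * f n := by ring



noncomputable def F0 (A B C : ℂ) (t : ℝ) : ℂ := ∑' n, α A B C n * ((t : ℂ)) ^ n
noncomputable def F1 (A B C : ℂ) (t : ℝ) : ℂ :=
  ∑' n, α A B C n * ((n : ℂ) * ((t : ℂ)) ^ (n - 1))
noncomputable def F2 (A B C : ℂ) (t : ℝ) : ℂ :=
  ∑' n, α A B C n * (n : ℂ) * (((n - 1 : ℕ) : ℂ) * ((t : ℂ)) ^ (n - 1 - 1))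

lemma pow_nat_sub_le {y r : ℝ} (hr0 : 0 < r) (hr1 : r ≤ 1) (hy : |y| ≤ r) (n k : ℕ) :
    |y| ^ (n - k) ≤ r ^ n / r ^ k := by
  rcases le_or_gt k n with h | h
  · calc |y| ^ (n - k) ≤ r ^ (n - k) := pow_le_pow_left₀ (abs_nonneg y) hy _
    _ = r ^ n / r ^ k := by rw [pow_sub₀ r hr0.ne' h, div_eq_mul_inv]
  · rw [Nat.sub_eq_zero_of_le h.le, pow_zero, le_div_iff₀ (by positivity), one_mul]
    exact pow_le_pow_of_le_one hr0.le hr1 h.le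

lemma radius_facts {x : ℝ} (hx : x ∈ Ioo (-1 : ℝ) 1) :
    0 < (1 + |x|) / 2 ∧ (1 + |x|) / 2 < 1 ∧ |x| < (1 + |x|) / 2 := by
  have h1 : |x| < 1 := abs_lt.2 ⟨hx.1, hx.2⟩
  have h0 : 0 ≤ |x| := abs_nonneg x
  refine ⟨by linarith, by linarith, by linarith⟩

lemma hasDerivAt_F0 (hC : ∀ n : ℕ, C ≠ -(n : ℂ)) {x : ℝ} (hx : x ∈ Ioo (-1 : ℝ) 1) :
    HasDerivAt (fun t : ℝ => F0 A B C t) (F1 A B C x) x := by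
  obtain ⟨hr0, hr1, hxr⟩ := radius_facts hx
  set r : ℝ := (1 + |x|) / 2
  unfold F0 F1
  refine hasDerivAt_tsum_of_isPreconnected (t := Ioo (-r) r) (y₀ := 0)
    (u := fun n => ‖α A B C n‖ * ((n : ℝ) + 1) ^ 1 * r ^ n / r)
    (g := fun n (t : ℝ) => α A B C n * ((t : ℂ)) ^ n)
    (g' := fun n (t : ℝ) => α A B C n * ((n : ℂ) * ((t : ℂ)) ^ (n - 1)))
    ((sum_aux hC hr0 hr1 1).div_const r) isOpen_Ioo isPreconnected_Ioo
    (fun n y _ => ?_) (fun n y hy => ?_) ?_ ?_ ?_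
  · exact HasDerivAt.const_mul (α A B C n) ((hasDerivAt_pow n ((y : ℂ))).comp_ofReal)
  · have hyr : |y| ≤ r := (abs_lt.2 ⟨hy.1, hy.2⟩).le
    have hp := pow_nat_sub_le hr0 hr1.le hyr n 1
    rw [pow_one] at hp
    rw [norm_mul, norm_mul, norm_pow, Complex.norm_natCast, Complex.norm_real,
      Real.norm_eq_abs]
    calc ‖α A B C n‖ * ((n : ℝ) * |y| ^ (n - 1))
        ≤ ‖α A B C n‖ * (((n : ℝ) + 1) * (r ^ n / r)) :=
          mul_le_mul_of_nonneg_left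
            (mul_le_mul (by linarith) hp (by positivity) (by positivity)) (norm_nonneg _)
    _ = ‖α A B C n‖ * ((n : ℝ) + 1) ^ 1 * r ^ n / r := by ring
  · exact ⟨neg_lt_zero.2 hr0, hr0⟩
  · apply Summable.of_norm_bounded (sum_aux hC hr0 hr1 0)
    intro n
    rw [norm_mul, norm_pow, Complex.norm_real, Real.norm_eq_abs, abs_zero, pow_zero, mul_one]
    exact mul_le_mul_of_nonneg_left (pow_le_pow_left₀ le_rfl hr0.le n) (norm_nonneg _)
  · exact ⟨neg_lt_of_abs_lt hxr, lt_of_abs_lt hxr⟩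

lemma hasDerivAt_F1 (hC : ∀ n : ℕ, C ≠ -(n : ℂ)) {x : ℝ} (hx : x ∈ Ioo (-1 : ℝ) 1) :
    HasDerivAt (fun t : ℝ => F1 A B C t) (F2 A B C x) x := by
  obtain ⟨hr0, hr1, hxr⟩ := radius_facts hx
  set r : ℝ := (1 + |x|) / 2
  unfold F1 F2
  refine hasDerivAt_tsum_of_isPreconnected (t := Ioo (-r) r) (y₀ := 0)
    (u := fun n => ‖α A B C n‖ * ((n : ℝ) + 1) ^ 2 * r ^ n / r ^ 2)
    (g := fun n (t : ℝ) => α A B C n * ((n : ℂ) * ((t : ℂ)) ^ (n - 1)))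
    (g' := fun n (t : ℝ) => α A B C n * (n : ℂ) * (((n - 1 : ℕ) : ℂ) * ((t : ℂ)) ^ (n - 1 - 1)))
    ((sum_aux hC hr0 hr1 2).div_const _) isOpen_Ioo isPreconnected_Ioo
    (fun n y _ => ?_) (fun n y hy => ?_) ?_ ?_ ?_
  · have := HasDerivAt.const_mul (α A B C n * (n : ℂ))
      ((hasDerivAt_pow (n - 1) ((y : ℂ))).comp_ofReal)
    simpa only [mul_assoc] using this
  · have hyr : |y| ≤ r := (abs_lt.2 ⟨hy.1, hy.2⟩).le
    have hp := pow_nat_sub_le hr0 hr1.le hyr n 2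
    simp only [Nat.sub_sub, norm_mul, norm_pow, Complex.norm_natCast, Complex.norm_real,
      Real.norm_eq_abs]
    have h1 : (n : ℝ) ≤ (n : ℝ) + 1 := by linarith
    have h2 : ((n - 1 : ℕ) : ℝ) ≤ (n : ℝ) + 1 := by
      have : ((n - 1 : ℕ) : ℝ) ≤ (n : ℝ) := by exact_mod_cast Nat.sub_le n 1
      linarith
    calc ‖α A B C n‖ * (n : ℝ) * (((n - 1 : ℕ) : ℝ) * |y| ^ (n - (1 + 1))) ≤
        ‖α A B C n‖ * ((n : ℝ) + 1) * (((n : ℝ) + 1) * (r ^ n / r ^ 2)) := by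
          have hle : |y| ^ (n - (1 + 1)) ≤ r ^ n / r ^ 2 := hp
          apply mul_le_mul (mul_le_mul_of_nonneg_left h1 (norm_nonneg _))
            (mul_le_mul h2 hle (by positivity) (by linarith [Nat.cast_nonneg (α := ℝ) n]))
            (by positivity) (by positivity)
    _ = ‖α A B C n‖ * ((n : ℝ) + 1) ^ 2 * r ^ n / r ^ 2 := by ring
  · exact ⟨neg_lt_zero.2 hr0, hr0⟩
  · apply Summable.of_norm_bounded ((sum_aux hC hr0 hr1 1).div_const r)
    intro n
    rw [norm_mul, norm_mul, norm_pow, Complex.norm_natCast, Complex.norm_real,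
      Real.norm_eq_abs, abs_zero]
    have hz : (0 : ℝ) ^ (n - 1) ≤ r ^ n / r := by
      have := pow_nat_sub_le hr0 hr1.le (by simpa using hr0.le : |(0 : ℝ)| ≤ r) n 1
      rw [pow_one] at this
      simpa using this
    calc ‖α A B C n‖ * ((n : ℝ) * (0 : ℝ) ^ (n - 1))
        ≤ ‖α A B C n‖ * (((n : ℝ) + 1) * (r ^ n / r)) := by
          apply mul_le_mul_of_nonneg_left _ (norm_nonneg _)
          apply mul_le_mul (by linarith) hz (by positivity) (by positivity)
    _ = ‖α A B C n‖ * ((n : ℝ) + 1) ^ 1 * r ^ n / r := by ring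
  · exact ⟨neg_lt_of_abs_lt hxr, lt_of_abs_lt hxr⟩


lemma norm_add_nat_le (W : ℂ) (n : ℕ) : ‖W + (n : ℂ)‖ ≤ (1 + ‖W‖) * ((n : ℝ) + 1) := by
  have h1 : ‖W + (n : ℂ)‖ ≤ ‖W‖ + (n : ℝ) := by
    calc ‖W + (n : ℂ)‖ ≤ ‖W‖ + ‖(n : ℂ)‖ := norm_add_le _ _
    _ = ‖W‖ + (n : ℝ) := by rw [Complex.norm_natCast]
  nlinarith [norm_nonneg W, Nat.cast_nonneg (α := ℝ) n]

lemma bracket (hC : ∀ n : ℕ, C ≠ -(n : ℂ)) {x : ℝ} (hx : x ∈ Ioo (-1 : ℝ) 1) :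
    ((x : ℂ)) * (1 - (x : ℂ)) * F2 A B C x + (C - (A + B + 1) * (x : ℂ)) * F1 A B C x
      - A * B * F0 A B C x = 0 := by
  obtain ⟨hr0, hr1, hxr⟩ := radius_facts hx
  set r : ℝ := (1 + |x|) / 2
  set X : ℂ := ((x : ℝ) : ℂ) with hX
  have hXn : ‖X‖ = |x| := by rw [hX, Complex.norm_real, Real.norm_eq_abs]
  have hxrle : |x| ≤ r := hxr.le
  -- summability of the term series
  have hS0 : Summable (fun n => α A B C n * X ^ n) := by
    apply Summable.of_norm_bounded (sum_aux hC hr0 hr1 0)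
    intro n
    rw [norm_mul, norm_pow, hXn, pow_zero, mul_one]
    exact mul_le_mul_of_nonneg_left (pow_le_pow_left₀ (abs_nonneg x) hxrle n) (norm_nonneg _)
  have hS1 : Summable (fun n => α A B C n * ((n : ℂ) * X ^ (n - 1))) := by
    apply Summable.of_norm_bounded ((sum_aux hC hr0 hr1 1).div_const r)
    intro n
    rw [norm_mul, norm_mul, norm_pow, Complex.norm_natCast, hXn]
    have hp := pow_nat_sub_le hr0 hr1.le hxrle n 1
    rw [pow_one] at hp
    calc ‖α A B C n‖ * ((n : ℝ) * |x| ^ (n - 1))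
        ≤ ‖α A B C n‖ * (((n : ℝ) + 1) * (r ^ n / r)) :=
          mul_le_mul_of_nonneg_left
            (mul_le_mul (by linarith) hp (by positivity) (by positivity)) (norm_nonneg _)
    _ = ‖α A B C n‖ * ((n : ℝ) + 1) ^ 1 * r ^ n / r := by ring
  have hS2 : Summable (fun n => α A B C n * (n : ℂ) * (((n - 1 : ℕ) : ℂ) * X ^ (n - 1 - 1))) := by
    apply Summable.of_norm_bounded ((sum_aux hC hr0 hr1 2).div_const (r ^ 2))
    intro n
    simp only [Nat.sub_sub, norm_mul, norm_pow, Complex.norm_natCast, hXn]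
    have hp := pow_nat_sub_le hr0 hr1.le hxrle n 2
    have h1 : (n : ℝ) ≤ (n : ℝ) + 1 := by linarith
    have h2 : ((n - 1 : ℕ) : ℝ) ≤ (n : ℝ) + 1 := by
      have : ((n - 1 : ℕ) : ℝ) ≤ (n : ℝ) := by exact_mod_cast Nat.sub_le n 1
      linarith
    calc ‖α A B C n‖ * (n : ℝ) * (((n - 1 : ℕ) : ℝ) * |x| ^ (n - (1 + 1)))
        ≤ ‖α A B C n‖ * ((n : ℝ) + 1) * (((n : ℝ) + 1) * (r ^ n / r ^ 2)) := by
          apply mul_le_mul (mul_le_mul_of_nonneg_left h1 (norm_nonneg _))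
            (mul_le_mul h2 hp (by positivity) (by linarith [Nat.cast_nonneg (α := ℝ) n]))
            (by positivity) (by positivity)
    _ = ‖α A B C n‖ * ((n : ℝ) + 1) ^ 2 * r ^ n / r ^ 2 := by ring
  -- Q and R
  set Q : ℕ → ℂ := fun n => α A B C n * ((n : ℂ) * (((n : ℂ) - 1) + C)) * X ^ (n - 1) with hQ
  set R : ℕ → ℂ := fun n => α A B C n * ((A + (n : ℂ)) * (B + (n : ℂ))) * X ^ n with hR
  have hSQ : Summable Q := by
    apply Summable.of_norm_bounded (((sum_aux hC hr0 hr1 2).mul_left ((1 + ‖C‖) / r)).congr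
      (fun n => rfl))
    intro n
    simp only [hQ, norm_mul, norm_pow, Complex.norm_natCast, hXn]
    have hp := pow_nat_sub_le hr0 hr1.le hxrle n 1
    rw [pow_one] at hp
    have h2 : ‖(n : ℂ) - 1 + C‖ ≤ (1 + ‖C‖) * ((n : ℝ) + 1) := by
      calc ‖(n : ℂ) - 1 + C‖ = ‖C + ((n : ℂ) - 1)‖ := by ring_nf
      _ ≤ ‖C‖ + ‖(n : ℂ) - 1‖ := norm_add_le _ _
      _ ≤ ‖C‖ + (‖(n : ℂ)‖ + 1) := by linarith [norm_sub_le ((n : ℂ)) (1 : ℂ), norm_one (α := ℂ)]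
      _ = ‖C‖ + ((n : ℝ) + 1) := by rw [Complex.norm_natCast]
      _ ≤ (1 + ‖C‖) * ((n : ℝ) + 1) := by nlinarith [norm_nonneg C, Nat.cast_nonneg (α := ℝ) n]
    calc ‖α A B C n‖ * ((n : ℝ) * ‖(n : ℂ) - 1 + C‖) * |x| ^ (n - 1)
        ≤ ‖α A B C n‖ * (((n : ℝ) + 1) * ((1 + ‖C‖) * ((n : ℝ) + 1))) * (r ^ n / r) := by
          apply mul_le_mul (mul_le_mul_of_nonneg_left
            (mul_le_mul (by linarith) h2 (norm_nonneg _) (by positivity)) (norm_nonneg _))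
            hp (by positivity) (by positivity)
    _ = (1 + ‖C‖) / r * (‖α A B C n‖ * ((n : ℝ) + 1) ^ 2 * r ^ n) := by ring
  have hSR : Summable R := by
    apply Summable.of_norm_bounded (((sum_aux hC hr0 hr1 2).mul_left
      ((1 + ‖A‖) * (1 + ‖B‖))).congr (fun n => rfl))
    intro n
    simp only [hR, norm_mul, norm_pow, hXn]
    have hxp : |x| ^ n ≤ r ^ n := pow_le_pow_left₀ (abs_nonneg x) hxrle n
    calc ‖α A B C n‖ * (‖A + (n : ℂ)‖ * ‖B + (n : ℂ)‖) * |x| ^ n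
        ≤ ‖α A B C n‖ * ((1 + ‖A‖) * ((n : ℝ) + 1) * ((1 + ‖B‖) * ((n : ℝ) + 1))) * r ^ n := by
          apply mul_le_mul (mul_le_mul_of_nonneg_left
            (mul_le_mul (norm_add_nat_le A n) (norm_add_nat_le B n) (norm_nonneg _)
              (by positivity)) (norm_nonneg _)) hxp (by positivity) (by positivity)
    _ = (1 + ‖A‖) * (1 + ‖B‖) * (‖α A B C n‖ * ((n : ℝ) + 1) ^ 2 * r ^ n) := by ring
  -- rewrite the bracket as a single tsum
  have step1 : ((x : ℂ)) * (1 - (x : ℂ)) * F2 A B C x + (C - (A + B + 1) * (x : ℂ)) * F1 A B C x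
      - A * B * F0 A B C x = ∑' n, (Q n - R n) := by
    unfold F0 F1 F2
    rw [← tsum_mul_left (a := ((x : ℂ)) * (1 - (x : ℂ))),
      ← tsum_mul_left (a := C - (A + B + 1) * (x : ℂ)),
      ← tsum_mul_left (a := A * B)]
    rw [← Summable.tsum_add (hS2.mul_left _) (hS1.mul_left _),
      ← Summable.tsum_sub ((hS2.mul_left _).add (hS1.mul_left _)) (hS0.mul_left _)]
    apply tsum_congr
    intro n
    simp only [hQ, hR]
    rcases n with _ | m
    · push_cast; ring
    · rcases m with _ | l
      · push_cast; ring
      · simp only [Nat.add_sub_cancel]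
        push_cast
        ring
  rw [step1, Summable.tsum_sub hSQ hSR, Summable.tsum_eq_zero_add hSQ]
  have hQ0 : Q 0 = 0 := by simp [hQ]
  have hQR : ∀ n : ℕ, Q (n + 1) = R n := by
    intro n
    simp only [hQ, hR, Nat.add_sub_cancel]
    push_cast
    linear_combination (X ^ n) * alpha_rec (A := A) (B := B) hC n
  rw [hQ0, zero_add]
  rw [tsum_congr hQR]
  ring


end HypAux

open HypAux in
/-- The second solution `u₅(x) = x^(1-c) ₂F₁(1+a-c, 1+b-c; 2-c; x)` of the Gauss equation:
for `2-c` not a nonpositive integer it is twice differentiable on `(0,1)` and satisfies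
`x(1-x)y'' + (c-(a+b+1)x)y' - ab·y = 0` there. -/
theorem second_solution_solves_gauss_equation (a b c : ℂ)
    (hc : ∀ n : ℕ, 2 - c ≠ -(n : ℂ)) :
    ∀ x ∈ Ioo (0 : ℝ) 1,
      DifferentiableAt ℝ
        (fun t : ℝ => ((t : ℂ)) ^ (1 - c) * hyp (1 + a - c) (1 + b - c) (2 - c) t) x ∧
      DifferentiableAt ℝ
        (deriv fun t : ℝ => ((t : ℂ)) ^ (1 - c) * hyp (1 + a - c) (1 + b - c) (2 - c) t) x ∧
      (x : ℂ) * (1 - (x : ℂ)) *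
          deriv (deriv fun t : ℝ =>
            ((t : ℂ)) ^ (1 - c) * hyp (1 + a - c) (1 + b - c) (2 - c) t) x +
        (c - (a + b + 1) * (x : ℂ)) *
          deriv (fun t : ℝ =>
            ((t : ℂ)) ^ (1 - c) * hyp (1 + a - c) (1 + b - c) (2 - c) t) x -
        a * b * (((x : ℝ) : ℂ) ^ (1 - c) * hyp (1 + a - c) (1 + b - c) (2 - c) x) = 0 := by
  intro x hx
  have hfun : (fun t : ℝ => ((t : ℂ)) ^ (1 - c) * hyp (1 + a - c) (1 + b - c) (2 - c) t)
      = (fun t : ℝ => ((t : ℂ)) ^ (1 - c) * F0 (1 + a - c) (1 + b - c) (2 - c) t) := rfl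
  rw [hfun]
  have hIoo : ∀ t : ℝ, t ∈ Ioo (0 : ℝ) 1 → t ∈ Ioo (-1 : ℝ) 1 :=
    fun t ht => ⟨by linarith [ht.1], ht.2⟩
  -- first derivative
  have hD1 : ∀ t ∈ Ioo (0 : ℝ) 1,
      HasDerivAt (fun u : ℝ => ((u : ℂ)) ^ (1 - c) * F0 (1 + a - c) (1 + b - c) (2 - c) u)
        ((1 - c) * ((t : ℂ)) ^ (-c) * F0 (1 + a - c) (1 + b - c) (2 - c) t
          + ((t : ℂ)) ^ (1 - c) * F1 (1 + a - c) (1 + b - c) (2 - c) t) t := by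
    intro t ht
    have hsl : ((t : ℝ) : ℂ) ∈ slitPlane := ofReal_mem_slitPlane.2 ht.1
    have hp : HasDerivAt (fun u : ℝ => ((u : ℂ)) ^ (1 - c))
        ((1 - c) * ((t : ℂ)) ^ ((1 - c) - 1)) t :=
      (Complex.hasStrictDerivAt_cpow_const hsl).hasDerivAt.comp_ofReal
    rw [show (1 : ℂ) - c - 1 = -c by ring] at hp
    exact hp.mul (hasDerivAt_F0 hc (hIoo t ht))
  -- second derivative
  have hD2 : ∀ t ∈ Ioo (0 : ℝ) 1,
      HasDerivAt (fun u : ℝ => (1 - c) * ((u : ℂ)) ^ (-c) * F0 (1 + a - c) (1 + b - c) (2 - c) u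
          + ((u : ℂ)) ^ (1 - c) * F1 (1 + a - c) (1 + b - c) (2 - c) u)
        ((1 - c) * (-c * ((t : ℂ)) ^ (-c - 1)) * F0 (1 + a - c) (1 + b - c) (2 - c) t
          + (1 - c) * ((t : ℂ)) ^ (-c) * F1 (1 + a - c) (1 + b - c) (2 - c) t
          + ((1 - c) * ((t : ℂ)) ^ ((1 - c) - 1) * F1 (1 + a - c) (1 + b - c) (2 - c) t
              + ((t : ℂ)) ^ (1 - c) * F2 (1 + a - c) (1 + b - c) (2 - c) t)) t := by
    intro t ht
    have hsl : ((t : ℝ) : ℂ) ∈ slitPlane := ofReal_mem_slitPlane.2 ht.1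
    have hq : HasDerivAt (fun u : ℝ => ((u : ℂ)) ^ (-c)) (-c * ((t : ℂ)) ^ (-c - 1)) t :=
      (Complex.hasStrictDerivAt_cpow_const hsl).hasDerivAt.comp_ofReal
    have hp : HasDerivAt (fun u : ℝ => ((u : ℂ)) ^ (1 - c))
        ((1 - c) * ((t : ℂ)) ^ ((1 - c) - 1)) t :=
      (Complex.hasStrictDerivAt_cpow_const hsl).hasDerivAt.comp_ofReal
    exact ((HasDerivAt.const_mul (1 - c) hq).mul (hasDerivAt_F0 hc (hIoo t ht))).add
      (hp.mul (hasDerivAt_F1 hc (hIoo t ht)))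
  -- wiring
  have hEq : (deriv fun u : ℝ => ((u : ℂ)) ^ (1 - c) * F0 (1 + a - c) (1 + b - c) (2 - c) u)
      =ᶠ[𝓝 x] (fun t : ℝ => (1 - c) * ((t : ℂ)) ^ (-c) * F0 (1 + a - c) (1 + b - c) (2 - c) t
          + ((t : ℂ)) ^ (1 - c) * F1 (1 + a - c) (1 + b - c) (2 - c) t) := by
    filter_upwards [isOpen_Ioo.mem_nhds hx] with t ht using (hD1 t ht).deriv
  refine ⟨(hD1 x hx).differentiableAt, ?_, ?_⟩
  · exact (Filter.EventuallyEq.differentiableAt_iff hEq).2 (hD2 x hx).differentiableAt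
  · have hd1 : (deriv fun u : ℝ => ((u : ℂ)) ^ (1 - c) * F0 (1 + a - c) (1 + b - c) (2 - c) u) x
        = (1 - c) * ((x : ℂ)) ^ (-c) * F0 (1 + a - c) (1 + b - c) (2 - c) x
          + ((x : ℂ)) ^ (1 - c) * F1 (1 + a - c) (1 + b - c) (2 - c) x := (hD1 x hx).deriv
    have hd2 : (deriv (deriv fun u : ℝ =>
          ((u : ℂ)) ^ (1 - c) * F0 (1 + a - c) (1 + b - c) (2 - c) u)) x
        = ((1 - c) * (-c * ((x : ℂ)) ^ (-c - 1)) * F0 (1 + a - c) (1 + b - c) (2 - c) x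
          + (1 - c) * ((x : ℂ)) ^ (-c) * F1 (1 + a - c) (1 + b - c) (2 - c) x
          + ((1 - c) * ((x : ℂ)) ^ ((1 - c) - 1) * F1 (1 + a - c) (1 + b - c) (2 - c) x
              + ((x : ℂ)) ^ (1 - c) * F2 (1 + a - c) (1 + b - c) (2 - c) x)) := by
      rw [Filter.EventuallyEq.deriv_eq hEq]
      exact (hD2 x hx).deriv
    rw [show hyp (1 + a - c) (1 + b - c) (2 - c) ((x : ℝ) : ℂ)
      = F0 (1 + a - c) (1 + b - c) (2 - c) x from rfl]
    rw [hd1, hd2]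
    have hBr := bracket (A := 1 + a - c) (B := 1 + b - c) hc (hIoo x hx)
    have hX0 : ((x : ℝ) : ℂ) ≠ 0 := by
      simpa using ne_of_gt hx.1
    have e1 : ((x : ℂ)) ^ ((1 : ℂ) - c) = ((x : ℂ)) ^ (-c) * ((x : ℂ)) := by
      rw [show (1 : ℂ) - c = -c + 1 by ring, Complex.cpow_add _ _ hX0, Complex.cpow_one]
    have e0 : ((x : ℂ)) ^ (-c) = ((x : ℂ)) ^ (-c - 1) * ((x : ℂ)) := by
      conv_lhs => rw [show -c = -c - 1 + 1 by ring]
      rw [Complex.cpow_add _ _ hX0, Complex.cpow_one]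
    rw [show (1 : ℂ) - c - 1 = -c by ring, e1, e0]
    linear_combination (((x : ℂ)) ^ (-c - 1) * ((x : ℂ)) ^ 2) * hBr
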